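/- arXiv:1411.7301 — 3 statements merged into one kernel-verified Lean document; each statement's English description precedes it below -/
import Mathlib

section
/- Let B₀, B ∈ ℝ^{n×n}, Ψ ∈ ℝ^{n×l}, and let M ∈ ℝ^{l×l} be symmetric with B = B₀ + ΨMΨᵀ. Let s, y ∈ ℝⁿ and α, β, δ ∈ ℝ, and set p = MΨᵀs ∈ ℝ^l. Then B + [Bs y] [[α, β], [β, δ]] [Bs y]ᵀ = B₀ + [Ψ B₀s y] Ĝ [Ψ B₀s y]ᵀ, where [Ψ B₀s y] ∈ ℝ^{n×(l+2)} is the matrix obtained by appending the columns B₀s and y to Ψ, and Ĝ ∈ ℝ^{(l+2)×(l+2)} is the block matrix [[M + αppᵀ, αp, βp], [αpᵀ, α, β], [βpᵀ, β, δ]]. -/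
open Matrix

/-- Induction step of the compact representation: a rank-two update of a compactly
represented matrix `B = B₀ + Ψ M Ψᵀ` is again in compact form, with the augmented
factor `[Ψ B₀s y]` and the bordered middle matrix `Ĝ`. -/
theorem broyden_compact_induction_step {n l : ℕ}
    (B₀ B : Matrix (Fin n) (Fin n) ℝ)
    (Ψ : Matrix (Fin n) (Fin l) ℝ) (M : Matrix (Fin l) (Fin l) ℝ)
    (hM : M.IsSymm) (hB : B = B₀ + Ψ * M * Ψᵀ)
    (s y : Fin n → ℝ) (α β δ : ℝ) :
    B + (Matrix.of fun i (j : Fin 2) => if j = 0 then B.mulVec s i else y i) *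
          !![α, β; β, δ] *
          (Matrix.of fun i (j : Fin 2) => if j = 0 then B.mulVec s i else y i)ᵀ
    = B₀ + (Matrix.fromCols Ψ
          (Matrix.of fun i (j : Fin 2) => if j = 0 then B₀.mulVec s i else y i)) *
        (Matrix.fromBlocks
          (M + α • Matrix.vecMulVec (M.mulVec (Ψᵀ.mulVec s)) (M.mulVec (Ψᵀ.mulVec s)))
          (Matrix.of fun i (j : Fin 2) =>
            if j = 0 then α * M.mulVec (Ψᵀ.mulVec s) i else β * M.mulVec (Ψᵀ.mulVec s) i)
          (Matrix.of fun (j : Fin 2) i =>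
            if j = 0 then α * M.mulVec (Ψᵀ.mulVec s) i else β * M.mulVec (Ψᵀ.mulVec s) i)
          !![α, β; β, δ]) *
        (Matrix.fromCols Ψ
          (Matrix.of fun i (j : Fin 2) => if j = 0 then B₀.mulVec s i else y i))ᵀ := by
  set p : Fin l → ℝ := M.mulVec (Ψᵀ.mulVec s) with hp
  set W : Matrix (Fin n) (Fin 2) ℝ :=
    Matrix.of fun i (j : Fin 2) => if j = 0 then B₀.mulVec s i else y i with hW
  set K : Matrix (Fin 2) (Fin 2) ℝ := !![α, β; β, δ] with hK
  set Q : Matrix (Fin l) (Fin 2) ℝ :=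
    Matrix.of fun j (c : Fin 2) => if c = 0 then p j else 0 with hQ
  have hBs : B.mulVec s = B₀.mulVec s + Ψ.mulVec p := by
    rw [hB, Matrix.add_mulVec, ← Matrix.mulVec_mulVec, ← Matrix.mulVec_mulVec, hp]
  have hV : (Matrix.of fun i (j : Fin 2) => if j = 0 then B.mulVec s i else y i)
      = W + Ψ * Q := by
    ext i c
    have h0 := congrFun hBs i
    simp [Matrix.mulVec, dotProduct] at h0
    fin_cases c <;>
      simp [h0, hW, hQ, Matrix.mul_apply, Matrix.mulVec, dotProduct]
  have hG12 : (Matrix.of fun j (c : Fin 2) =>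
      if c = 0 then α * p j else β * p j) = Q * K := by
    ext j c
    fin_cases c <;> simp [hQ, hK, Matrix.mul_apply, Fin.sum_univ_two, mul_comm]
  have hG21 : (Matrix.of fun (c : Fin 2) j =>
      if c = 0 then α * p j else β * p j) = K * Qᵀ := by
    ext c j
    fin_cases c <;> simp [hQ, hK, Matrix.mul_apply, Fin.sum_univ_two]
  have hG11 : α • Matrix.vecMulVec p p = Q * K * Qᵀ := by
    ext j j'
    simp [hQ, hK, Matrix.mul_apply, Fin.sum_univ_two, Matrix.vecMulVec_apply]
    ring
  rw [hV, hG12, hG21, hG11, hB, Matrix.transpose_fromCols,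
    Matrix.fromCols_mul_fromBlocks, Matrix.fromCols_mul_fromRows]
  have hKT : Kᵀ = K := by
    ext i j; fin_cases i <;> fin_cases j <;> simp [hK]
  simp only [Matrix.transpose_add, Matrix.transpose_mul, hKT]
  simp only [Matrix.mul_add, Matrix.add_mul, Matrix.mul_assoc]
  abel
end

section
/- Let n ≥ l ≥ 1, γ ∈ ℝ, let M ∈ ℝ^{l×l} be symmetric, and let Ψ ∈ ℝ^{n×l}. Suppose Ψ = Q·[R₁; 0] where Q ∈ ℝ^{n×n} is orthogonal and R₁ ∈ ℝ^{l×l} (so [R₁; 0] ∈ ℝ^{n×l} stacks R₁ above the (n−l)×l zero matrix). Set B = γIₙ + ΨMΨᵀ. Then the characteristic polynomial of B equals (X − γ)^{n−l} times the characteristic polynomial of the l×l matrix γI_l + R₁MR₁ᵀ. In particular, if d₁, …, d_l are the eigenvalues of R₁MR₁ᵀ (with multiplicity), the eigenvalues of B are γ + d₁, …, γ + d_l together with γ with multiplicity n − l. -/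
open Matrix Polynomial

lemma charpoly_conj_orth {n : Type*} [Fintype n] [DecidableEq n]
    (Q A : Matrix n n ℝ) (hQ : Qᵀ * Q = 1) :
    (Q * A * Qᵀ).charpoly = A.charpoly := by
  have hQ' : Q * Qᵀ = 1 := mul_eq_one_comm.mp hQ
  have hmap : (Q.map (C : ℝ →+* ℝ[X])) * (Qᵀ.map C) = 1 := by
    rw [← Matrix.map_mul, hQ', Matrix.map_one _ (map_zero C) (map_one C)]
  unfold Matrix.charpoly
  have hch : charmatrix (Q * A * Qᵀ)
      = (Q.map C) * charmatrix A * (Qᵀ.map C) := by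
    unfold charmatrix
    rw [Matrix.mul_sub, Matrix.sub_mul]
    congr 1
    · rw [scalar_apply, ← Matrix.smul_one_eq_diagonal, Matrix.mul_smul, Matrix.smul_mul, mul_one, hmap]
    · simp [RingHom.mapMatrix_apply, Matrix.map_mul]
  rw [hch, det_mul, det_mul]
  have : (Q.map (C : ℝ →+* ℝ[X])).det * (Qᵀ.map C).det = 1 := by
    rw [← det_mul, hmap, det_one]
  calc (Q.map (C : ℝ →+* ℝ[X])).det * (charmatrix A).det * (Qᵀ.map C).det
      = (Q.map C).det * (Qᵀ.map C).det * (charmatrix A).det := by ring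
    _ = (charmatrix A).det := by rw [this, one_mul]

lemma charpoly_smul_one {n : Type*} [Fintype n] [DecidableEq n] (γ : ℝ) :
    (γ • (1 : Matrix n n ℝ)).charpoly = (X - C γ) ^ Fintype.card n := by
  unfold Matrix.charpoly charmatrix
  have : ((γ • (1 : Matrix n n ℝ)).map (C : ℝ →+* ℝ[X])) = C γ • (1 : Matrix n n ℝ[X]) := by
    ext i j
    by_cases h : i = j <;> simp [h, Matrix.one_apply]
  rw [RingHom.mapMatrix_apply, this, scalar_apply, ← Matrix.smul_one_eq_diagonal,
    ← sub_smul, det_smul, det_one, mul_one]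

/-- If `Ψ = Q [R₁; 0]` is a full QR factorization of `Ψ ∈ ℝ^{n×l}` (here `n = l + m`,
with the row indices encoded as `Fin l ⊕ Fin m`), `M` is symmetric, and
`B = γI + Ψ M Ψᵀ`, then the characteristic polynomial of `B` is `(X - γ)^{n-l}` times
the characteristic polynomial of the `l × l` matrix `γI + R₁ M R₁ᵀ`. -/
theorem charpoly_compact_quasi_newton {l m : ℕ} (hl : 1 ≤ l) (γ : ℝ)
    (M : Matrix (Fin l) (Fin l) ℝ) (hM : M.IsSymm)
    (Ψ : Matrix (Fin l ⊕ Fin m) (Fin l) ℝ)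
    (Q : Matrix (Fin l ⊕ Fin m) (Fin l ⊕ Fin m) ℝ) (hQ : Qᵀ * Q = 1)
    (R₁ : Matrix (Fin l) (Fin l) ℝ)
    (hΨ : Ψ = Q * Matrix.fromRows R₁ (0 : Matrix (Fin m) (Fin l) ℝ)) :
    (γ • (1 : Matrix (Fin l ⊕ Fin m) (Fin l ⊕ Fin m) ℝ) + Ψ * M * Ψᵀ).charpoly
      = (X - C γ) ^ m * (γ • (1 : Matrix (Fin l) (Fin l) ℝ) + R₁ * M * R₁ᵀ).charpoly := by
  have hQ' : Q * Qᵀ = 1 := mul_eq_one_comm.mp hQ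
  set F := Matrix.fromRows R₁ (0 : Matrix (Fin m) (Fin l) ℝ) with hF
  have key : γ • (1 : Matrix (Fin l ⊕ Fin m) (Fin l ⊕ Fin m) ℝ) + Ψ * M * Ψᵀ
      = Q * (γ • 1 + F * M * Fᵀ) * Qᵀ := by
    rw [hΨ, Matrix.transpose_mul]
    rw [Matrix.mul_add, Matrix.add_mul, Matrix.mul_smul, Matrix.smul_mul, mul_one, hQ']
    congr 1
    simp [Matrix.mul_assoc]
  have hblk : F * M * Fᵀ
      = Matrix.fromBlocks (R₁ * M * R₁ᵀ) 0 0 (0 : Matrix (Fin m) (Fin m) ℝ) := by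
    rw [hF, Matrix.transpose_fromRows, Matrix.fromRows_mul,
      Matrix.fromRows_mul_fromCols]
    simp
  have hone : γ • (1 : Matrix (Fin l ⊕ Fin m) (Fin l ⊕ Fin m) ℝ)
      = Matrix.fromBlocks (γ • 1) 0 0 (γ • (1 : Matrix (Fin m) (Fin m) ℝ)) := by
    rw [← Matrix.fromBlocks_one, Matrix.fromBlocks_smul, smul_zero, smul_zero]
  rw [key, charpoly_conj_orth _ _ hQ, hblk, hone, Matrix.fromBlocks_add]
  simp only [add_zero]
  rw [Matrix.charpoly_fromBlocks_zero₂₁, charpoly_smul_one, Fintype.card_fin, mul_comm]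
end

section
/- Let n ≥ 2 and let s, y ∈ ℝⁿ with s ≠ 0 and sᵀy ≠ 0. Set θ = (sᵀs)/(sᵀy) and define B₁ = (1/θ)Iₙ − (1/θ)·ssᵀ/(sᵀs) + yyᵀ/(sᵀy). Then the characteristic polynomial of B₁ is p(λ) = ( λ² − (1/θ)(1 + θ·(yᵀy)/(sᵀy))·λ + 1/θ² ) · ( λ − 1/θ )^{n−2}. -/
open Matrix Polynomial

set_option synthInstance.maxHeartbeats 1000000 in
set_option maxHeartbeats 2000000 in
/-- The characteristic polynomial of the one-update BFGS matrix
`B₁ = (1/θ)I − (1/θ)ssᵀ/(sᵀs) + yyᵀ/(sᵀy)`, with `θ = (sᵀs)/(sᵀy)`, is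
`(λ² − (1/θ)(1 + θ yᵀy/(sᵀy))λ + 1/θ²)(λ − 1/θ)^{n−2}` (here `n = m + 2 ≥ 2`). -/
theorem charpoly_one_update_bfgs {m : ℕ} (s y : Fin (m + 2) → ℝ)
    (hs : s ≠ 0) (hsy : s ⬝ᵥ y ≠ 0) :
    ((1 / ((s ⬝ᵥ s) / (s ⬝ᵥ y))) • (1 : Matrix (Fin (m + 2)) (Fin (m + 2)) ℝ)
        - (1 / ((s ⬝ᵥ s) / (s ⬝ᵥ y)) * (1 / (s ⬝ᵥ s))) • Matrix.vecMulVec s s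
        + (1 / (s ⬝ᵥ y)) • Matrix.vecMulVec y y).charpoly
      = (X ^ 2
          - C (1 / ((s ⬝ᵥ s) / (s ⬝ᵥ y)) *
              (1 + ((s ⬝ᵥ s) / (s ⬝ᵥ y)) * (y ⬝ᵥ y) / (s ⬝ᵥ y))) * X
          + C (1 / ((s ⬝ᵥ s) / (s ⬝ᵥ y)) ^ 2))
        * (X - C (1 / ((s ⬝ᵥ s) / (s ⬝ᵥ y)))) ^ m := by
  have ha : s ⬝ᵥ s ≠ 0 := fun h => hs (dotProduct_self_eq_zero.mp h)
  set a := s ⬝ᵥ s with ha_def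
  set b := s ⬝ᵥ y with hb_def
  set c := y ⬝ᵥ y with hc_def
  have hys : y ⬝ᵥ s = b := dotProduct_comm y s
  set φ : Polynomial ℝ →+* RatFunc ℝ :=
    (algebraMap (Polynomial ℝ) (RatFunc ℝ) : Polynomial ℝ →+* RatFunc ℝ) with hφ
  have hinj : Function.Injective φ := IsFractionRing.injective _ _
  apply hinj
  set r : ℝ →+* RatFunc ℝ := φ.comp (C : ℝ →+* Polynomial ℝ) with hr
  set x : RatFunc ℝ := φ X with hx
  set t : RatFunc ℝ := x - r (b / a) with htdef
  have ht : t ≠ 0 := by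
    rw [htdef]
    intro h
    apply Polynomial.X_sub_C_ne_zero (b / a)
    apply hinj
    rw [map_sub, map_zero]
    exact h
  have hra : r a ≠ 0 := fun h => ha (by
    have := (map_eq_zero_iff r (hinj.comp Polynomial.C_injective)).mp h
    exact this)
  have hrb : r b ≠ 0 := fun h => hsy (by
    have := (map_eq_zero_iff r (hinj.comp Polynomial.C_injective)).mp h
    exact this)
  set A : Matrix (Fin (m + 2)) (Fin 2) (RatFunc ℝ) :=
    Matrix.of (fun i j => if j = 0 then r (s i) else r (y i)) with hA
  set B : Matrix (Fin 2) (Fin (m + 2)) (RatFunc ℝ) :=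
    Matrix.of (fun i j => if i = 0 then r (b / a) / (r a * t) * r (s j)
      else -(1 / (r b * t)) * r (y j)) with hB
  have hsum : ∀ (u v : Fin (m + 2) → ℝ), (∑ j, r (u j) * r (v j)) = r (u ⬝ᵥ v) := by
    intro u v
    rw [dotProduct, map_sum]
    simp [_root_.map_mul]
  rw [Matrix.charpoly, RingHom.map_det, RingHom.mapMatrix_apply]
  have hC : ∀ z : ℝ, φ (Polynomial.C z) = r z := fun z => rfl
  have hmat : ((charmatrix
      ((1 / (a / b)) • (1 : Matrix (Fin (m + 2)) (Fin (m + 2)) ℝ)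
        - (1 / (a / b) * (1 / a)) • Matrix.vecMulVec s s
        + (1 / b) • Matrix.vecMulVec y y)).map φ) = t • (1 + A * B) := by
    ext i j
    have hAB : (A * B) i j = r (s i) * (r (b / a) / (r a * t) * r (s j))
        + r (y i) * (-(1 / (r b * t)) * r (y j)) := by
      simp [Matrix.mul_apply, Fin.sum_univ_two, hA, hB]
    by_cases h : i = j
    · subst h
      simp only [Matrix.map_apply, charmatrix_apply_eq, Matrix.smul_apply,
        Matrix.add_apply, Matrix.sub_apply, Matrix.one_apply_eq,
        Matrix.vecMulVec_apply, smul_eq_mul, map_sub, map_add, _root_.map_mul, hAB]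
      rw [show φ Polynomial.X = x from rfl]
      simp only [hC]
      have hxu : x = t + r (b / a) := by rw [htdef]; ring
      clear_value t
      rw [hxu]
      simp only [map_div₀, _root_.map_mul, map_add, _root_.map_one, one_div_div]
      field_simp
      try ring_nf
      try field_simp
      try ring
    · simp only [Matrix.map_apply, charmatrix_apply_ne _ _ _ h, Matrix.smul_apply,
        Matrix.add_apply, Matrix.sub_apply, Matrix.one_apply_ne h,
        Matrix.vecMulVec_apply, smul_eq_mul, map_neg, map_sub, map_add,
        _root_.map_mul, hAB]
      simp only [hC, mul_zero, map_zero]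
      have hxu : x = t + r (b / a) := by rw [htdef]; ring
      clear_value t
      simp only [map_div₀, _root_.map_mul, map_add, _root_.map_one, one_div_div]
      field_simp
      try ring_nf
      try field_simp
      try ring
  rw [hmat, Matrix.det_smul, Matrix.det_one_add_mul_comm, Matrix.det_fin_two]
  have key0 : ∀ (k : RatFunc ℝ) (u v : Fin (m + 2) → ℝ),
      (∑ j, k * r (u j) * r (v j)) = k * r (u ⬝ᵥ v) := by
    intro k u v
    rw [← hsum u v, Finset.mul_sum]
    exact Finset.sum_congr rfl fun j _ => by ring
  have e00 : (1 + B * A : Matrix (Fin 2) (Fin 2) (RatFunc ℝ)) 0 0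
      = 1 + r (b / a) / (r a * t) * r a := by
    simp only [Matrix.add_apply, Matrix.mul_apply, hA, hB, Matrix.of_apply, Matrix.one_apply,
      show ((0 : Fin 2) = 0) = True from by decide,
      show ((0 : Fin 2) = 1) = False from by decide,
      show ((0 : Fin 2) = 0) = True from by decide,
      show ((0 : Fin 2) = 1) = False from by decide,
      show ((1 : Fin 2) = 0) = False from by decide,
      show ((1 : Fin 2) = 1) = True from by decide, if_true, if_false]
    rw [key0, ← ha_def]
  have e01 : (1 + B * A : Matrix (Fin 2) (Fin 2) (RatFunc ℝ)) 0 1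
      = r (b / a) / (r a * t) * r b := by
    simp only [Matrix.add_apply, Matrix.mul_apply, hA, hB, Matrix.of_apply, Matrix.one_apply,
      show ((0 : Fin 2) = 0) = True from by decide,
      show ((0 : Fin 2) = 1) = False from by decide,
      show ((1 : Fin 2) = 0) = False from by decide,
      show ((1 : Fin 2) = 1) = True from by decide, if_true, if_false, zero_add]
    rw [key0, ← hb_def]
  have e10 : (1 + B * A : Matrix (Fin 2) (Fin 2) (RatFunc ℝ)) 1 0
      = -(1 / (r b * t)) * r b := by
    simp only [Matrix.add_apply, Matrix.mul_apply, hA, hB, Matrix.of_apply, Matrix.one_apply,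
      show ((0 : Fin 2) = 0) = True from by decide,
      show ((0 : Fin 2) = 1) = False from by decide,
      show ((1 : Fin 2) = 0) = False from by decide,
      show ((1 : Fin 2) = 1) = True from by decide, if_true, if_false, zero_add]
    rw [key0, hys]
  have e11 : (1 + B * A : Matrix (Fin 2) (Fin 2) (RatFunc ℝ)) 1 1
      = 1 + -(1 / (r b * t)) * r c := by
    simp only [Matrix.add_apply, Matrix.mul_apply, hA, hB, Matrix.of_apply, Matrix.one_apply,
      show ((0 : Fin 2) = 0) = True from by decide,
      show ((0 : Fin 2) = 1) = False from by decide,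
      show ((1 : Fin 2) = 0) = False from by decide,
      show ((1 : Fin 2) = 1) = True from by decide, if_true, if_false]
    rw [key0, ← hc_def]
  rw [e00, e01, e10, e11]
  simp only [_root_.map_mul, map_add, map_sub, map_pow, hC]
  rw [show φ Polynomial.X = x from rfl]
  have key : t ^ 2 * ((1 + r (b / a) / (r a * t) * r a) * (1 + -(1 / (r b * t)) * r c)
      - r (b / a) / (r a * t) * r b * (-(1 / (r b * t)) * r b))
      = x ^ 2 - r (1 / (a / b) * (1 + a / b * c / b)) * x + r ((1 / (a / b)) ^ 2) := by
    have hxu : x = t + r (b / a) := by rw [htdef]; ring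
    clear_value t
    rw [hxu]
    simp only [map_div₀, _root_.map_mul, map_add, _root_.map_one, map_pow, one_div_div]
    field_simp
    ring_nf
  have hteq : x - r (1 / (a / b)) = t := by
    rw [htdef]
    congr 1
    rw [one_div_div]
  rw [hteq, Fintype.card_fin, pow_add]
  rw [show r (1 / (a / b)) * (r 1 + r (a / b * c / b)) = r (1 / (a / b) * (1 + a / b * c / b))
      from by rw [_root_.map_mul, map_add, _root_.map_one],
    show r (1 / (a / b) ^ 2) = r ((1 / (a / b)) ^ 2) from by rw [_root_.one_div_pow]]
  calc t ^ m * t ^ 2 * ((1 + r (b / a) / (r a * t) * r a) * (1 + -(1 / (r b * t)) * r c)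
        - r (b / a) / (r a * t) * r b * (-(1 / (r b * t)) * r b))
      = t ^ m * (t ^ 2 * ((1 + r (b / a) / (r a * t) * r a) * (1 + -(1 / (r b * t)) * r c)
        - r (b / a) / (r a * t) * r b * (-(1 / (r b * t)) * r b))) := by ring
    _ = t ^ m * (x ^ 2 - r (1 / (a / b) * (1 + a / b * c / b)) * x
        + r ((1 / (a / b)) ^ 2)) := by rw [key]
    _ = (x ^ 2 - r (1 / (a / b) * (1 + a / b * c / b)) * x
        + r ((1 / (a / b)) ^ 2)) * t ^ m := by ring
end
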